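/- Let λ, θ ∈ ℂ and k ≥ 1. Suppose v^1, …, v^k ∈ ℂ^{1×N} form a left Jordan chain of W at λ, i.e. v^1 ≠ 0, v^1·(W − λI) = 0 and v^j·(W − λI) = v^{j−1} for j = 2, …, k, and suppose ξ^1, …, ξ^k ∈ ℂ^{1×n} form a generalized left Jordan chain of E_λ about 𝓗(h) at θ, i.e. ξ^1·(θI − E_λ) = 0 and ξ^j·(θI − E_λ) = ξ^{j−1}·𝓗(h) for j = 2, …, k. Then the row vector η = Σ_{j=1}^{k} v^{k+1−j} ⊗ ξ^j satisfies η·Φ_s = θ·η, i.e. η is a left eigenvector of Φ_s for θ whenever it is nonzero. -/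

import Mathlib

open Matrix
open scoped Kronecker

/-- Entrywise complexification of a real matrix. -/
noncomputable def cpx {a b : Type*} (M : Matrix a b ℝ) : Matrix a b ℂ :=
  M.map (Complex.ofReal)

/-- The matrix exponential `e^{M}`. -/
noncomputable def mexp {q : Type*} [Fintype q] [DecidableEq q]
    (M : Matrix q q ℝ) : Matrix q q ℝ :=
  NormedSpace.exp M

/-- The entrywise integral `∫₀ʰ e^{Aτ} dτ`. -/
noncomputable def intExp {q : Type*} [Fintype q] [DecidableEq q]
    (A : Matrix q q ℝ) (h : ℝ) : Matrix q q ℝ :=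
  Matrix.of fun i j => ∫ τ in (0:ℝ)..h, (NormedSpace.exp (τ • A)) i j

/-- `θ` is an eigenvalue of the complex square matrix `M`. -/
def IsEig {q : Type*} [Fintype q] [DecidableEq q] (M : Matrix q q ℂ) (θ : ℂ) : Prop :=
  (θ • (1 : Matrix q q ℂ) - M).det = 0

/-- PBH condition for a pair of complex matrices: for every `s ∈ ℂ`, the only row
vector `v` with `v (sI - M) = 0` and `v G = 0` is `v = 0`. -/
def PBH {q r : Type*} [Fintype q] [DecidableEq q] [Fintype r]
    (M : Matrix q q ℂ) (G : Matrix q r ℂ) : Prop :=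
  ∀ (s : ℂ) (v : q → ℂ), v ᵥ* (s • (1 : Matrix q q ℂ) - M) = 0 → v ᵥ* G = 0 → v = 0

/-- Controllability of a discrete-time linear system `x⁺ = F x + G u`:
every state can be steered to the origin in finitely many steps. -/
def Controllable {q r : Type*} [Fintype q] [DecidableEq q] [Fintype r]
    (F : Matrix q q ℝ) (G : Matrix q r ℝ) : Prop :=
  ∀ x : q → ℝ, ∃ (k : ℕ) (u : Fin k → r → ℝ),
    (F ^ k) *ᵥ x + ∑ j : Fin k, (F ^ (k - 1 - (j : ℕ))) *ᵥ (G *ᵥ u j) = 0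

/-- `𝓑(h) = (∫₀ʰ e^{Aτ} dτ)·B`. -/
noncomputable def sampB {n p : ℕ} (A : Matrix (Fin n) (Fin n) ℝ)
    (B : Matrix (Fin n) (Fin p) ℝ) (h : ℝ) : Matrix (Fin n) (Fin p) ℝ :=
  intExp A h * B

/-- `𝓗(h) = (∫₀ʰ e^{Aτ} dτ)·H·C`. -/
noncomputable def sampH {n m : ℕ} (A : Matrix (Fin n) (Fin n) ℝ)
    (H : Matrix (Fin n) (Fin m) ℝ) (C : Matrix (Fin m) (Fin n) ℝ) (h : ℝ) :
    Matrix (Fin n) (Fin n) ℝ :=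
  intExp A h * H * C

/-- `Φ_s = I_N ⊗ e^{Ah} + W ⊗ 𝓗(h)`. -/
noncomputable def Phis {n m N : ℕ} (A : Matrix (Fin n) (Fin n) ℝ)
    (H : Matrix (Fin n) (Fin m) ℝ) (C : Matrix (Fin m) (Fin n) ℝ)
    (W : Matrix (Fin N) (Fin N) ℝ) (h : ℝ) :
    Matrix (Fin N × Fin n) (Fin N × Fin n) ℝ :=
  (1 : Matrix (Fin N) (Fin N) ℝ) ⊗ₖ mexp (h • A) + W ⊗ₖ sampH A H C h

/-- `E_λ = e^{Ah} + λ·𝓗(h)` (complexified). -/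
noncomputable def Emat {n m : ℕ} (A : Matrix (Fin n) (Fin n) ℝ)
    (H : Matrix (Fin n) (Fin m) ℝ) (C : Matrix (Fin m) (Fin n) ℝ)
    (h : ℝ) (lam : ℂ) : Matrix (Fin n) (Fin n) ℂ :=
  cpx (mexp (h • A)) + lam • cpx (sampH A H C h)

section Aux

open Matrix
open scoped Kronecker

variable {N' n' : Type*} [Fintype N'] [Fintype n']

/-- tensor of two row vectors -/
def tmul (u : N' → ℂ) (w : n' → ℂ) : N' × n' → ℂ := fun q => u q.1 * w q.2

lemma tmul_vecMul_kron [DecidableEq N'] [DecidableEq n']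
    (u : N' → ℂ) (w : n' → ℂ) (M : Matrix N' N' ℂ) (P : Matrix n' n' ℂ) :
    tmul u w ᵥ* (M ⊗ₖ P) = tmul (u ᵥ* M) (w ᵥ* P) := by
  funext q
  simp only [tmul, Matrix.vecMul, dotProduct, Matrix.kroneckerMap_apply]
  rw [Finset.sum_mul_sum]
  rw [← Finset.sum_product']
  rw [show (Finset.univ : Finset (N' × n')) = Finset.univ ×ˢ Finset.univ from rfl]
  exact Finset.sum_congr rfl fun x _ => by ring

lemma tmul_add_left (u u' : N' → ℂ) (w : n' → ℂ) :
    tmul (u + u') w = tmul u w + tmul u' w := by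
  funext q; simp [tmul]; ring

lemma tmul_sub_right (u : N' → ℂ) (w w' : n' → ℂ) :
    tmul u (w - w') = tmul u w - tmul u w' := by
  funext q; simp [tmul]; ring

lemma tmul_smul_left (c : ℂ) (u : N' → ℂ) (w : n' → ℂ) :
    tmul (c • u) w = c • tmul u w := by
  funext q; simp [tmul]; ring

lemma tmul_smul_right (c : ℂ) (u : N' → ℂ) (w : n' → ℂ) :
    tmul u (c • w) = c • tmul u w := by
  funext q; simp [tmul]; ring

lemma tmul_zero_left (w : n' → ℂ) : tmul (0 : N' → ℂ) w = 0 := by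
  funext q; simp [tmul]

lemma tmul_zero_right (u : N' → ℂ) : tmul u (0 : n' → ℂ) = 0 := by
  funext q; simp [tmul]

lemma sum_vecMul {ι : Type*} (s : Finset ι) (f : ι → N' → ℂ) (M : Matrix N' N' ℂ) :
    (∑ j ∈ s, f j) ᵥ* M = ∑ j ∈ s, f j ᵥ* M := by
  classical
  induction s using Finset.induction with
  | empty => simp
  | insert _ _ hx ih => simp [Finset.sum_insert hx, Matrix.add_vecMul, ih]

lemma vecMul_smul_mat (c : ℂ) (u : N' → ℂ) (M : Matrix N' N' ℂ) :
    u ᵥ* (c • M) = c • (u ᵥ* M) := by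
  funext i
  simp [Matrix.vecMul, dotProduct, Finset.mul_sum]
  exact Finset.sum_congr rfl fun x _ => by ring

lemma cpx_kron {a b : ℕ} (M : Matrix (Fin a) (Fin a) ℝ) (P : Matrix (Fin b) (Fin b) ℝ) :
    cpx (M ⊗ₖ P) = cpx M ⊗ₖ cpx P := by
  ext q q'
  simp [cpx, Matrix.kroneckerMap_apply, Matrix.map_apply]

lemma cpx_add {a b : Type*} [Fintype a] [Fintype b] (M P : Matrix a b ℝ) :
    cpx (M + P) = cpx M + cpx P := by
  ext i j
  simp [cpx, Matrix.map_apply]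

lemma cpx_one {a : ℕ} : cpx (1 : Matrix (Fin a) (Fin a) ℝ) = 1 := by
  ext i j
  simp [cpx, Matrix.map_apply, Matrix.one_apply, apply_ite Complex.ofReal]

end Aux

theorem stmt1
    (n m p N : ℕ) (hn : 0 < n) (hm : 0 < m) (hp : 0 < p) (hN : 0 < N)
    (h : ℝ) (hh : 0 < h)
    (A : Matrix (Fin n) (Fin n) ℝ) (B : Matrix (Fin n) (Fin p) ℝ)
    (C : Matrix (Fin m) (Fin n) ℝ) (H : Matrix (Fin n) (Fin m) ℝ)
    (W : Matrix (Fin N) (Fin N) ℝ)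
    (lam θ : ℂ) (k : ℕ) (hk : 1 ≤ k)
    (v : ℕ → Fin N → ℂ) (ξ : ℕ → Fin n → ℂ)
    (hv1 : v 0 ≠ 0)
    (hv0 : v 0 ᵥ* (cpx W - lam • (1 : Matrix (Fin N) (Fin N) ℂ)) = 0)
    (hvj : ∀ j, 1 ≤ j → j < k →
      v j ᵥ* (cpx W - lam • (1 : Matrix (Fin N) (Fin N) ℂ)) = v (j - 1))
    (hx0 : ξ 0 ᵥ* (θ • (1 : Matrix (Fin n) (Fin n) ℂ) - Emat A H C h lam) = 0)
    (hxj : ∀ j, 1 ≤ j → j < k →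
      ξ j ᵥ* (θ • (1 : Matrix (Fin n) (Fin n) ℂ) - Emat A H C h lam) =
        ξ (j - 1) ᵥ* cpx (sampH A H C h)) :
    (fun q : Fin N × Fin n => ∑ j ∈ Finset.range k, v (k - 1 - j) q.1 * ξ j q.2) ᵥ*
        cpx (Phis A H C W h) =
      θ • fun q : Fin N × Fin n => ∑ j ∈ Finset.range k, v (k - 1 - j) q.1 * ξ j q.2 := by
  classical
  set Ec := cpx (mexp (h • A)) with hEcdef
  set Hc := cpx (sampH A H C h) with hHcdef
  set Wc := cpx W with hWcdef
  have hPhi : cpx (Phis A H C W h)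
      = (1 : Matrix (Fin N) (Fin N) ℂ) ⊗ₖ Ec + Wc ⊗ₖ Hc := by
    rw [Phis, cpx_add, cpx_kron, cpx_kron, cpx_one]
  have hEmat : ∀ u : Fin n → ℂ, u ᵥ* Emat A H C h lam = u ᵥ* Ec + lam • (u ᵥ* Hc) := by
    intro u
    rw [show Emat A H C h lam = Ec + lam • Hc from rfl, Matrix.vecMul_add, vecMul_smul_mat]
  have hxi : ∀ j, j < k → ξ j ᵥ* Ec =
      θ • ξ j - (if j = 0 then 0 else ξ (j - 1) ᵥ* Hc) - lam • (ξ j ᵥ* Hc) := by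
    intro j hj
    by_cases h0 : j = 0
    · subst h0
      have h2 := hx0
      rw [Matrix.vecMul_sub, vecMul_smul_mat, Matrix.vecMul_one, hEmat] at h2
      rw [if_pos rfl, sub_zero]
      funext i
      have h3 := congrFun h2 i
      simp only [Pi.sub_apply, Pi.add_apply, Pi.smul_apply, smul_eq_mul,
        Pi.zero_apply] at h3 ⊢
      linear_combination -h3
    · have h2 := hxj j (by omega) hj
      rw [Matrix.vecMul_sub, vecMul_smul_mat, Matrix.vecMul_one, hEmat] at h2
      rw [if_neg h0]
      funext i
      have h3 := congrFun h2 i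
      simp only [Pi.sub_apply, Pi.add_apply, Pi.smul_apply, smul_eq_mul] at h3 ⊢
      linear_combination -h3
  have hvv : ∀ j, j < k → v (k - 1 - j) ᵥ* Wc =
      lam • v (k - 1 - j) + (if j = k - 1 then 0 else v (k - 2 - j)) := by
    intro j hj
    by_cases h0 : j = k - 1
    · have e0 : k - 1 - j = 0 := by omega
      rw [e0, if_pos h0]
      have h2 := hv0
      rw [Matrix.vecMul_sub, vecMul_smul_mat, Matrix.vecMul_one] at h2
      funext i
      have h3 := congrFun h2 i
      simp only [Pi.sub_apply, Pi.add_apply, Pi.smul_apply, smul_eq_mul,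
        Pi.zero_apply] at h3 ⊢
      linear_combination h3
    · have h1 : 1 ≤ k - 1 - j := by omega
      have h2 := hvj (k - 1 - j) h1 (by omega)
      rw [Matrix.vecMul_sub, vecMul_smul_mat, Matrix.vecMul_one] at h2
      have e1 : k - 1 - j - 1 = k - 2 - j := by omega
      rw [e1] at h2
      rw [if_neg h0]
      funext i
      have h3 := congrFun h2 i
      simp only [Pi.sub_apply, Pi.add_apply, Pi.smul_apply, smul_eq_mul] at h3 ⊢
      linear_combination h3
  have hfun : (fun q : Fin N × Fin n => ∑ j ∈ Finset.range k, v (k - 1 - j) q.1 * ξ j q.2)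
      = ∑ j ∈ Finset.range k, tmul (v (k - 1 - j)) (ξ j) := by
    funext q
    simp [tmul, Finset.sum_apply]
  rw [hfun, hPhi, _root_.sum_vecMul]
  have hterm : ∀ j ∈ Finset.range k,
      tmul (v (k - 1 - j)) (ξ j) ᵥ* ((1 : Matrix (Fin N) (Fin N) ℂ) ⊗ₖ Ec + Wc ⊗ₖ Hc)
        = θ • tmul (v (k - 1 - j)) (ξ j)
          - tmul (v (k - 1 - j)) (if j = 0 then 0 else ξ (j - 1) ᵥ* Hc)
          + tmul (if j = k - 1 then 0 else v (k - 2 - j)) (ξ j ᵥ* Hc) := by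
    intro j hj
    rw [Finset.mem_range] at hj
    rw [Matrix.vecMul_add, tmul_vecMul_kron, tmul_vecMul_kron, Matrix.vecMul_one,
      hxi j hj, hvv j hj]
    simp only [tmul_sub_right, tmul_smul_right, tmul_add_left, tmul_smul_left]
    abel
  rw [Finset.sum_congr rfl hterm, Finset.sum_add_distrib, Finset.sum_sub_distrib,
    ← Finset.smul_sum]
  have hcancel : ∑ j ∈ Finset.range k,
        tmul (v (k - 1 - j)) (if j = 0 then 0 else ξ (j - 1) ᵥ* Hc)
      = ∑ j ∈ Finset.range k,
        tmul (if j = k - 1 then 0 else v (k - 2 - j)) (ξ j ᵥ* Hc) := by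
    obtain ⟨K, rfl⟩ : ∃ K, k = K + 1 := ⟨k - 1, by omega⟩
    rw [Finset.sum_range_succ', Finset.sum_range_succ]
    rw [if_pos rfl, tmul_zero_right, if_pos (by omega : K = K + 1 - 1), tmul_zero_left,
      add_zero, add_zero]
    refine Finset.sum_congr rfl fun j hj => ?_
    rw [Finset.mem_range] at hj
    rw [if_neg (by omega : ¬ (j + 1 = 0)), if_neg (by omega : ¬ (j = K + 1 - 1))]
    have e1 : K + 1 - 1 - (j + 1) = K + 1 - 2 - j := by omega
    have e2 : j + 1 - 1 = j := by omega
    rw [e1, e2]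
  rw [hcancel]
  abel
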